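/- For a strong composition α, κ_α = 𝔉_α (the key polynomial equals a single fundamental slide polynomial) if and only if α is a partition, i.e., α is weakly decreasing. -/

import Mathlib

/-- `b` dominates `a`: every partial sum of `b` is at least that of `a`. -/
def Dominates (b a : List ℕ) : Prop :=
  ∀ i : ℕ, (a.take i).sum ≤ (b.take i).sum

/-- `flatten a` removes the zero parts of a weak composition. -/
def Flatten (a : List ℕ) : List ℕ := a.filter (· != 0)

/-- `β` refines `α`: `β` decomposes into consecutive nonempty blocks whose sums give `α`. -/
def Refines (β α : List ℕ) : Prop :=
  ∃ L : List (List ℕ), (∀ l ∈ L, l ≠ []) ∧ L.flatten = β ∧ L.map List.sum = α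

/-- The set of inversions of a composition: pairs `i < j` with `α i < α j`. -/
def invSet (α : List ℕ) : Finset (Fin α.length × Fin α.length) :=
  Finset.univ.filter fun p => p.1 < p.2 ∧ α.get p.1 < α.get p.2

/-- Kohnert tableau of content `a`, encoded as a filling `T : (row, col) → entry`,
with `0` meaning an empty position, rows and columns indexed from `1`. -/
def IsKohnert (a : List ℕ) (T : ℕ × ℕ → ℕ) : Prop :=
  -- cells live at positive coordinates
  (∀ r c, T (r, c) ≠ 0 → 1 ≤ r ∧ 1 ≤ c) ∧
  -- entries are among 1,…,ℓ
  (∀ r c, T (r, c) ≠ 0 → 1 ≤ T (r, c) ∧ T (r, c) ≤ a.length) ∧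
  -- (i) for each i there is exactly one i in each column 1,…,aᵢ and none beyond
  (∀ i, 1 ≤ i → i ≤ a.length → ∀ c, 1 ≤ c →
    (c ≤ a.getD (i - 1) 0 → ∃! r, T (r, c) = i) ∧
    (a.getD (i - 1) 0 < c → ∀ r, T (r, c) ≠ i)) ∧
  -- (ii) each entry in row r is at least r
  (∀ r c, T (r, c) ≠ 0 → r ≤ T (r, c)) ∧
  -- (iii) the cells filled with a given entry weakly descend from left to right
  (∀ r c r' c', T (r, c) ≠ 0 → T (r, c) = T (r', c') → c < c' → r' ≤ r) ∧
  -- (iv) if i < j share a column with i above j, there is an i in the next column,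
  -- strictly above the cell containing j
  (∀ r r' c, T (r, c) ≠ 0 → T (r', c) ≠ 0 → T (r, c) < T (r', c) → r' < r →
    ∃ r'', r' < r'' ∧ T (r'', c + 1) = T (r, c))

/-- Quasi-Yamanouchi Kohnert tableau: additionally (v) every nonempty row `r` contains
the entry `r`, or has a cell in row `r+1` weakly right of one of its cells. -/
def IsQYKohnert (a : List ℕ) (T : ℕ × ℕ → ℕ) : Prop :=
  IsKohnert a T ∧
  ∀ r, 1 ≤ r → (∃ c, T (r, c) ≠ 0) →
    ((∃ c, T (r, c) = r) ∨ ∃ c c', T (r, c) ≠ 0 ∧ T (r + 1, c') ≠ 0 ∧ c ≤ c')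

/-- The weight of a filling: the list recording the number of cells in each row `1,…,ℓ`. -/
def wtList (a : List ℕ) (T : ℕ × ℕ → ℕ) : List ℕ :=
  (List.range a.length).map fun r =>
    ((Finset.Icc 1 a.sum).filter fun c => T (r + 1, c) ≠ 0).card

open Classical in
/-- Coefficient of the monomial `x^b` in the fundamental slide polynomial `𝔉_a`. -/
noncomputable def fundCoeff (a b : List ℕ) : ℕ :=
  if b.length = a.length ∧ Dominates b a ∧ Refines (Flatten b) (Flatten a) then 1 else 0

/-- Coefficient of the monomial `x^b` in the key polynomial `κ_a`:
the number of Kohnert tableaux of content `a` and weight `b`. -/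
noncomputable def keyCoeff (a b : List ℕ) : ℕ :=
  Set.ncard {T : ℕ × ℕ → ℕ | IsKohnert a T ∧ wtList a T = b}

/-- The basic filling of content `a`: `aᵢ` cells filled with `i` in row `i`, columns `1,…,aᵢ`. -/
def basicFilling (a : List ℕ) : ℕ × ℕ → ℕ := fun p =>
  if 1 ≤ p.1 ∧ p.1 ≤ a.length ∧ 1 ≤ p.2 ∧ p.2 ≤ a.getD (p.1 - 1) 0 then p.1 else 0

/-- `κ_α` is multiplicity free in the fundamental slide basis: quasi-Yamanouchi
Kohnert tableaux of content `α` have pairwise distinct weights. -/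
def MultFree (α : List ℕ) : Prop :=
  ∀ T₁ T₂ : ℕ × ℕ → ℕ, IsQYKohnert α T₁ → IsQYKohnert α T₂ →
    wtList α T₁ = wtList α T₂ → T₁ = T₂

lemma my_mem_le_sum {a : ℕ} {l : List ℕ} (h : a ∈ l) : a ≤ l.sum := by
  induction l with
  | nil => simp at h
  | cons x xs ih =>
    rcases List.mem_cons.1 h with h | h
    · simp [h]
    · have := ih h; simp; omega

lemma my_getD_le_sum (α : List ℕ) (k : ℕ) : α.getD k 0 ≤ α.sum := by
  by_cases h : k < α.length
  · rw [List.getD_eq_getElem _ _ h]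
    exact my_mem_le_sum (List.getElem_mem h)
  · rw [List.getD_eq_default _ _ (by omega)]
    exact Nat.zero_le _

lemma my_sorted_getD {α : List ℕ} (hs : List.Pairwise (· ≥ ·) α) {j k : ℕ} (hjk : j ≤ k) :
    α.getD k 0 ≤ α.getD j 0 := by
  by_cases hk : k < α.length
  · have hj : j < α.length := lt_of_le_of_lt hjk hk
    rw [List.getD_eq_getElem _ _ hk, List.getD_eq_getElem _ _ hj]
    rcases eq_or_lt_of_le hjk with rfl | hlt
    · exact le_refl _
    · exact hs.rel_get_of_lt (by simpa using hlt)
  · rw [List.getD_eq_default _ _ (by omega)]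
    exact Nat.zero_le _

lemma flatten_eq_self {α : List ℕ} (hpos : ∀ x ∈ α, 0 < x) : Flatten α = α := by
  unfold Flatten
  rw [List.filter_eq_self]
  intro a ha
  simpa using (hpos a ha).ne'

lemma refines_self (α : List ℕ) : Refines α α := by
  refine ⟨α.map (fun x => [x]), by simp, ?_, by simp [Function.comp_def]⟩
  induction α with
  | nil => simp
  | cons x xs ih => simpa using ih

lemma len_le_sum {l : List ℕ} (h : ∀ x ∈ l, 1 ≤ x) : l.length ≤ l.sum := by
  induction l with
  | nil => simp
  | cons x xs ih =>
    simp only [List.length_cons, List.sum_cons]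
    have h1 := h x (List.mem_cons_self)
    have h2 := ih (fun y hy => h y (List.mem_cons_of_mem _ hy))
    omega

lemma all_one_of_sum_eq_len {l : List ℕ} (h : ∀ x ∈ l, 1 ≤ x) (he : l.sum = l.length) :
    ∀ x ∈ l, x = 1 := by
  induction l with
  | nil => simp
  | cons x xs ih =>
    simp only [List.sum_cons, List.length_cons] at he
    have h1 := h x (List.mem_cons_self)
    have h2 : xs.length ≤ xs.sum := len_le_sum (fun y hy => h y (List.mem_cons_of_mem _ hy))
    intro y hy
    simp only [List.mem_cons] at hy
    rcases hy with rfl | hy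
    · omega
    · exact ih (fun z hz => h z (List.mem_cons_of_mem _ hz)) (by omega) y hy

lemma flatten_eq_map_sum {L : List (List ℕ)} (h : ∀ l ∈ L, l.length = 1) :
    L.flatten = L.map List.sum := by
  induction L with
  | nil => simp
  | cons l L' ih =>
    match l, h l (by simp) with
    | [x], _ => simp [ih (fun m hm => h m (by simp [hm]))]

lemma fundCoeff_char {α : List ℕ} (hpos : ∀ x ∈ α, 0 < x) (b : List ℕ) :
    fundCoeff α b = if b = α then 1 else 0 := by
  unfold fundCoeff
  rw [flatten_eq_self hpos]
  by_cases hb : b = α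
  · subst hb
    rw [if_pos rfl, if_pos ⟨rfl, fun i => le_refl _,
      by rw [flatten_eq_self hpos]; exact refines_self _⟩]
  · rw [if_neg hb, if_neg]
    rintro ⟨hlen, -, L, hne, hfl, hsum⟩
    apply hb
    have hLlen : L.length = α.length := by rw [← hsum]; simp
    have h1 : ∀ x ∈ L.map List.length, 1 ≤ x := by
      intro x hx
      rcases List.mem_map.1 hx with ⟨l, hl, rfl⟩
      have := hne l hl
      cases l with
      | nil => simp at this
      | cons a as => simp
    have hflen : (Flatten b).length = (L.map List.length).sum := by
      rw [← hfl, List.length_flatten]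
    have hfb : (Flatten b).length ≤ b.length := List.length_filter_le _ _
    have hge : L.length ≤ (L.map List.length).sum := by
      have := len_le_sum h1
      simpa using this
    have heq : (L.map List.length).sum = (L.map List.length).length := by
      simp only [List.length_map]
      omega
    have hall1 : ∀ l ∈ L, l.length = 1 := by
      intro l hl
      exact all_one_of_sum_eq_len h1 heq (l.length) (List.mem_map.2 ⟨l, hl, rfl⟩)
    have hFb : Flatten b = α := by rw [← hfl, flatten_eq_map_sum hall1, hsum]
    have hlf : (Flatten b).length = b.length := by rw [hFb, hlen]
    have : Flatten b = b :=
      List.filter_eq_self.2 (List.length_filter_eq_length_iff.mp hlf)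
    rw [← this, hFb]

lemma basic_pos {α : List ℕ} {r c : ℕ} (h1 : 1 ≤ r) (h2 : r ≤ α.length) (h3 : 1 ≤ c)
    (h4 : c ≤ α.getD (r-1) 0) : basicFilling α (r, c) = r := by
  unfold basicFilling
  exact if_pos ⟨h1, h2, h3, h4⟩

lemma basic_val {α : List ℕ} {r c : ℕ} (h : basicFilling α (r, c) ≠ 0) :
    basicFilling α (r, c) = r ∧ 1 ≤ r ∧ r ≤ α.length ∧ 1 ≤ c ∧ c ≤ α.getD (r-1) 0 := by
  unfold basicFilling at h ⊢
  by_cases hc : 1 ≤ r ∧ r ≤ α.length ∧ 1 ≤ c ∧ c ≤ α.getD (r-1) 0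
  · rw [if_pos hc]
    exact ⟨rfl, hc⟩
  · rw [if_neg hc] at h
    exact absurd rfl h

lemma isKohnert_basic (α : List ℕ) : IsKohnert α (basicFilling α) := by
  refine ⟨?_, ?_, ?_, ?_, ?_, ?_⟩
  · intro r c h
    obtain ⟨-, h1, -, h3, -⟩ := basic_val h
    exact ⟨h1, h3⟩
  · intro r c h
    obtain ⟨hv, h1, h2, -⟩ := basic_val h
    rw [hv]
    exact ⟨h1, h2⟩
  · intro i hi1 hil c hc1
    constructor
    · intro hc2
      refine ⟨i, basic_pos hi1 hil hc1 hc2, ?_⟩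
      intro r hr
      have hne : basicFilling α (r, c) ≠ 0 := by rw [hr]; omega
      obtain ⟨hv, -⟩ := basic_val hne
      omega
    · intro hc2 r hr
      have hne : basicFilling α (r, c) ≠ 0 := by rw [hr]; omega
      obtain ⟨hv, -, -, -, h4⟩ := basic_val hne
      have : r = i := by omega
      subst this
      omega
  · intro r c h
    rw [(basic_val h).1]
  · intro r c r' c' h heq hcc
    have hne' : basicFilling α (r', c') ≠ 0 := by rw [← heq]; exact h
    have h1 := (basic_val h).1
    have h2 := (basic_val hne').1
    omega
  · intro r r' c h h' hlt hrr
    have h1 := (basic_val h).1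
    have h2 := (basic_val h').1
    omega

lemma wt_basic (α : List ℕ) : wtList α (basicFilling α) = α := by
  unfold wtList
  apply List.ext_getElem
  · simp
  · intro i hi1 hi2
    simp only [List.getElem_map, List.getElem_range]
    have hi : i < α.length := by simpa using hi1
    have hkey : ((Finset.Icc 1 α.sum).filter fun c => basicFilling α (i+1, c) ≠ 0)
        = Finset.Icc 1 (α.getD i 0) := by
      ext c
      simp only [Finset.mem_filter, Finset.mem_Icc]
      constructor
      · rintro ⟨⟨hc1, -⟩, hc⟩
        obtain ⟨-, -, -, -, h4⟩ := basic_val hc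
        exact ⟨hc1, h4⟩
      · rintro ⟨hc1, hc2⟩
        refine ⟨⟨hc1, le_trans hc2 (my_getD_le_sum α i)⟩, ?_⟩
        rw [basic_pos (by omega) (by omega) hc1 (by simpa using hc2)]
        omega
    rw [hkey, Nat.card_Icc, List.getD_eq_getElem _ _ hi]
    omega

lemma kohnert_col {α : List ℕ} (hs : List.Pairwise (· ≥ ·) α) {T : ℕ × ℕ → ℕ}
    (hT : IsKohnert α T) :
    ∀ i, 1 ≤ i → i ≤ α.length → ∀ c, 1 ≤ c → c ≤ α.getD (i-1) 0 → T (i, c) = i := by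
  obtain ⟨h0, h1, huni, hii, hiii, hiv⟩ := hT
  intro i
  induction i using Nat.strong_induction_on with
  | _ i IH =>
    intro hi1 hil c hc1 hc2
    obtain ⟨r, hr, huq⟩ := (huni i hi1 hil c hc1).1 hc2
    have hne : T (r, c) ≠ 0 := by rw [hr]; omega
    have hri : r ≤ i := by have := hii r c hne; omega
    have hr1 : 1 ≤ r := (h0 r c hne).1
    rcases eq_or_lt_of_le hri with rfl | hlt
    · exact hr
    · exfalso
      have hcr : c ≤ α.getD (r-1) 0 := le_trans hc2 (my_sorted_getD hs (by omega))
      have := IH r hlt hr1 (by omega) c hc1 hcr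
      omega

lemma kohnert_eq_basic {α : List ℕ} (hs : List.Pairwise (· ≥ ·) α) {T : ℕ × ℕ → ℕ}
    (hT : IsKohnert α T) : T = basicFilling α := by
  have hcol := kohnert_col hs hT
  obtain ⟨h0, h1, huni, hii, hiii, hiv⟩ := hT
  funext p
  obtain ⟨r, c⟩ := p
  by_cases hT0 : T (r, c) = 0
  · rw [hT0]
    by_contra hb
    have hb' : basicFilling α (r, c) ≠ 0 := fun h => hb h.symm
    obtain ⟨hv, hb1, hb2, hb3, hb4⟩ := basic_val hb'
    have := hcol r hb1 hb2 c hb3 hb4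
    omega
  · obtain ⟨hv1, hv2⟩ := h1 r c hT0
    obtain ⟨hr1, hc1⟩ := h0 r c hT0
    set v := T (r, c) with hv
    have hcv : c ≤ α.getD (v-1) 0 := by
      by_contra hcc
      exact (huni v hv1 hv2 c hc1).2 (by omega) r hv.symm
    have hTv : T (v, c) = v := hcol v hv1 hv2 c hc1 hcv
    obtain ⟨r', hr', huq⟩ := (huni v hv1 hv2 c hc1).1 hcv
    have hrv : r = v := by rw [huq r hv.symm, huq v hTv]
    have hb : basicFilling α (r, c) = r :=
      basic_pos (by omega) (by omega) hc1 (by rw [hrv]; exact hcv)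
    omega

lemma keyCoeff_of_sorted {α : List ℕ} (hs : List.Pairwise (· ≥ ·) α) (b : List ℕ) :
    keyCoeff α b = if b = α then 1 else 0 := by
  unfold keyCoeff
  by_cases hb : b = α
  · rw [if_pos hb, hb]
    have : {T : ℕ × ℕ → ℕ | IsKohnert α T ∧ wtList α T = α} = {basicFilling α} := by
      ext T
      simp only [Set.mem_setOf_eq, Set.mem_singleton_iff]
      constructor
      · rintro ⟨h1, -⟩
        exact kohnert_eq_basic hs h1
      · rintro rfl
        exact ⟨isKohnert_basic α, wt_basic α⟩
    rw [this, Set.ncard_singleton]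
  · rw [if_neg hb]
    have : {T : ℕ × ℕ → ℕ | IsKohnert α T ∧ wtList α T = b} = ∅ := by
      ext T
      simp only [Set.mem_setOf_eq, Set.mem_empty_iff_false, iff_false, not_and]
      intro h1 h2
      rw [kohnert_eq_basic hs h1, wt_basic α] at h2
      exact hb h2.symm
    rw [this, Set.ncard_empty]

def modFilling (α : List ℕ) (i : ℕ) : ℕ × ℕ → ℕ := fun q =>
  if q.1 = i + 1 ∧ α.getD i 0 < q.2 ∧ q.2 ≤ α.getD (i+1) 0 then i + 2
  else if q.1 = i + 2 ∧ α.getD i 0 < q.2 ∧ q.2 ≤ α.getD (i+1) 0 then 0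
  else basicFilling α q

lemma mod_eq_one {α : List ℕ} {i c : ℕ} (h1 : α.getD i 0 < c) (h2 : c ≤ α.getD (i+1) 0) :
    modFilling α i (i+1, c) = i + 2 := by
  show (if i + 1 = i + 1 ∧ α.getD i 0 < c ∧ c ≤ α.getD (i+1) 0 then i + 2
    else if i + 1 = i + 2 ∧ α.getD i 0 < c ∧ c ≤ α.getD (i+1) 0 then 0
    else basicFilling α (i+1, c)) = i + 2
  rw [if_pos ⟨rfl, h1, h2⟩]

lemma mod_eq_basic {α : List ℕ} {i r c : ℕ}
    (h1 : ¬(r = i + 1 ∧ α.getD i 0 < c ∧ c ≤ α.getD (i+1) 0))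
    (h2 : ¬(r = i + 2 ∧ α.getD i 0 < c ∧ c ≤ α.getD (i+1) 0)) :
    modFilling α i (r, c) = basicFilling α (r, c) := by
  simp only [modFilling]
  rw [if_neg h1, if_neg h2]

lemma modVal {α : List ℕ} {i r c : ℕ} (h : modFilling α i (r, c) ≠ 0) :
    (r = i+1 ∧ α.getD i 0 < c ∧ c ≤ α.getD (i+1) 0 ∧ modFilling α i (r, c) = i + 2) ∨
    (modFilling α i (r, c) = r ∧ 1 ≤ r ∧ r ≤ α.length ∧ 1 ≤ c ∧ c ≤ α.getD (r-1) 0 ∧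
      ¬(r = i+2 ∧ α.getD i 0 < c ∧ c ≤ α.getD (i+1) 0)) := by
  simp only [modFilling] at h ⊢
  split_ifs at h ⊢ with h1 h2
  · exact Or.inl ⟨h1.1, h1.2.1, h1.2.2, rfl⟩
  · exact absurd rfl h
  · obtain ⟨hv, hb1, hb2, hb3, hb4⟩ := basic_val h
    exact Or.inr ⟨hv, hb1, hb2, hb3, hb4, h2⟩

lemma isKohnert_mod {α : List ℕ} {i : ℕ} (hil : i + 1 < α.length)
    (hAB : α.getD i 0 < α.getD (i+1) 0) : IsKohnert α (modFilling α i) := by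
  have e1 : i + 1 - 1 = i := rfl
  have e2 : i + 2 - 1 = i + 1 := rfl
  refine ⟨?_, ?_, ?_, ?_, ?_, ?_⟩
  · intro r c h
    rcases modVal h with ⟨rfl, h2, h3, -⟩ | ⟨-, h1, -, h3, -⟩ <;> omega
  · intro r c h
    rcases modVal h with ⟨rfl, -, -, h4⟩ | ⟨hv, h1, h2, -⟩ <;> omega
  · intro j hj1 hjl c hc1
    constructor
    · intro hc2
      by_cases hj : j = i + 2
      · subst hj
        rw [e2] at hc2
        by_cases hcA : c ≤ α.getD i 0
        · refine ⟨i+2, ?_, ?_⟩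
          · show modFilling α i (i+2, c) = i+2
            rw [mod_eq_basic (by omega) (by omega)]
            apply basic_pos (by omega) (by omega) hc1
            rw [e2]; omega
          · intro r hr
            replace hr : modFilling α i (r, c) = i + 2 := hr
            rcases modVal (show modFilling α i (r, c) ≠ 0 by omega) with
              ⟨rfl, h2, h3, h4⟩ | ⟨hv, -, -, -, -, -⟩ <;> omega
        · refine ⟨i+1, mod_eq_one (by omega) hc2, ?_⟩
          intro r hr
          replace hr : modFilling α i (r, c) = i + 2 := hr
          rcases modVal (show modFilling α i (r, c) ≠ 0 by omega) with
            ⟨rfl, -, -, -⟩ | ⟨hv, -, -, -, hc5, hg⟩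
          · rfl
          · exfalso
            have hri : r = i + 2 := by omega
            subst hri
            rw [e2] at hc5
            omega
      · refine ⟨j, ?_, ?_⟩
        · show modFilling α i (j, c) = j
          rw [mod_eq_basic ?_ (by omega)]
          · exact basic_pos hj1 hjl hc1 hc2
          · rintro ⟨rfl, hcc, -⟩
            rw [e1] at hc2
            omega
        · intro r hr
          replace hr : modFilling α i (r, c) = j := hr
          rcases modVal (show modFilling α i (r, c) ≠ 0 by omega) with
            ⟨rfl, -, -, h4⟩ | ⟨hv, -, -, -, -, -⟩ <;> omega
    · intro hc2 r hr
      have hne : modFilling α i (r, c) ≠ 0 := by omega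
      rcases modVal hne with ⟨rfl, -, hc4, h4⟩ | ⟨hv, -, -, -, hc5, -⟩
      · have : j = i + 2 := by omega
        subst this
        rw [e2] at hc2
        omega
      · have : r = j := by omega
        subst this
        omega
  · intro r c h
    rcases modVal h with ⟨rfl, -, -, h4⟩ | ⟨hv, -, -, -, -, -⟩ <;> omega
  · intro r c r' c' h heq hcc
    have h' : modFilling α i (r', c') ≠ 0 := by omega
    rcases modVal h with ⟨rfl, ha2, ha3, ha4⟩ | ⟨hv, -, -, -, -, -⟩ <;>
      rcases modVal h' with ⟨rfl, hb2, hb3, hb4⟩ | ⟨hv', hb1, -, -, hb5, hbg⟩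
    · omega
    · -- cell1 new region (value i+2 at row i+1), cell2 basic with value i+2 → r' = i+2
      have hr' : r' = i + 2 := by omega
      subst hr'
      rw [e2] at hb5
      omega
    · omega
    · omega
  · intro r r' c h h' hlt hrr
    exfalso
    rcases modVal h with ⟨rfl, -, -, ha4⟩ | ⟨hv, -, -, -, -, -⟩ <;>
      rcases modVal h' with ⟨he, -, -, hb4⟩ | ⟨hv', -, -, -, -, -⟩ <;> omega

lemma count_eq {S m : ℕ} {T : ℕ × ℕ → ℕ} {row : ℕ} (hm : m ≤ S)
    (h : ∀ c, 1 ≤ c → (T (row, c) ≠ 0 ↔ c ≤ m)) :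
    ((Finset.Icc 1 S).filter fun c => T (row, c) ≠ 0).card = m := by
  have heq : ((Finset.Icc 1 S).filter fun c => T (row, c) ≠ 0) = Finset.Icc 1 m := by
    ext c
    simp only [Finset.mem_filter, Finset.mem_Icc]
    constructor
    · rintro ⟨⟨h1, h2⟩, h3⟩
      exact ⟨h1, (h c h1).1 h3⟩
    · rintro ⟨h1, h2⟩
      exact ⟨⟨h1, le_trans h2 hm⟩, (h c h1).2 h2⟩
  rw [heq, Nat.card_Icc]
  omega

lemma wt_mod {α : List ℕ} {i : ℕ} (hil : i + 1 < α.length)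
    (hAB : α.getD i 0 < α.getD (i+1) 0) :
    wtList α (modFilling α i) = (α.set i (α.getD (i+1) 0)).set (i+1) (α.getD i 0) := by
  have e1 : i + 1 - 1 = i := rfl
  have e2 : i + 2 - 1 = i + 1 := rfl
  unfold wtList
  apply List.ext_getElem
  · simp
  · intro k hk1 hk2
    simp only [List.getElem_map, List.getElem_range]
    have hk : k < α.length := by simpa using hk1
    have hbk : ((α.set i (α.getD (i+1) 0)).set (i+1) (α.getD i 0))[k]'hk2 =
        if i + 1 = k then α.getD i 0 else if i = k then α.getD (i+1) 0 else α[k]'hk := by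
      rw [List.getElem_set, List.getElem_set]
    rcases eq_or_ne k i with rfl | hki
    · rw [hbk, if_neg (by omega), if_pos rfl]
      apply count_eq (my_getD_le_sum α (k+1))
      intro c hc1
      constructor
      · intro hne
        rcases modVal hne with ⟨-, -, hc3, -⟩ | ⟨-, -, -, -, hc5, -⟩
        · exact hc3
        · rw [e1] at hc5
          omega
      · intro hc2
        by_cases hcA : c ≤ α.getD k 0
        · rw [mod_eq_basic (by omega) (by omega),
            basic_pos (by omega) (by omega) hc1 (by rw [e1]; omega)]
          omega
        · rw [mod_eq_one (by omega) hc2]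
          omega
    · rcases eq_or_ne k (i+1) with rfl | hki1
      · rw [hbk, if_pos rfl]
        apply count_eq (my_getD_le_sum α i)
        intro c hc1
        constructor
        · intro hne
          rcases modVal hne with ⟨hre, -, -, -⟩ | ⟨-, -, -, -, hc5, hg⟩
          · omega
          · rw [e2] at hc5
            omega
        · intro hc2
          rw [mod_eq_basic (by omega) (by omega),
            basic_pos (by omega) (by omega) hc1 (by rw [e2]; omega)]
          omega
      · rw [hbk, if_neg (by omega), if_neg (by omega)]
        rw [← List.getD_eq_getElem α 0 hk]
        apply count_eq (my_getD_le_sum α k)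
        intro c hc1
        rw [mod_eq_basic (by omega) (by omega)]
        constructor
        · intro hne
          obtain ⟨-, -, -, -, h5⟩ := basic_val hne
          simpa using h5
        · intro hc2
          rw [basic_pos (by omega) (by omega) hc1 (by simpa using hc2)]
          omega

lemma kohnert_val_bound {α : List ℕ} {T : ℕ × ℕ → ℕ} (hT : IsKohnert α T) {r c : ℕ}
    (h : T (r, c) ≠ 0) : r ≤ α.length ∧ c ≤ α.sum ∧ T (r, c) ≤ α.length := by
  obtain ⟨h0, h1, huni, hii, hiii, hiv⟩ := hT
  obtain ⟨hv1, hv2⟩ := h1 r c h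
  have hr := hii r c h
  obtain ⟨hr1, hc1⟩ := h0 r c h
  have hcb : c ≤ α.getD (T (r, c) - 1) 0 := by
    by_contra hcc
    exact (huni (T (r,c)) hv1 hv2 c hc1).2 (by omega) r rfl
  exact ⟨by omega, le_trans hcb (my_getD_le_sum _ _), hv2⟩

lemma kohnert_set_finite (α b : List ℕ) :
    {T : ℕ × ℕ → ℕ | IsKohnert α T ∧ wtList α T = b}.Finite := by
  classical
  let F : (ℕ × ℕ → ℕ) → (Fin (α.length + 1) × Fin (α.sum + 1) → Fin (α.length + 1)) :=
    fun T q => ⟨min (T (q.1.val, q.2.val)) α.length, by omega⟩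
  apply Set.Finite.of_finite_image (f := F) (Set.toFinite _)
  intro T1 hT1 T2 hT2 hF
  funext q
  obtain ⟨r, c⟩ := q
  obtain ⟨hK1, -⟩ := hT1
  obtain ⟨hK2, -⟩ := hT2
  by_cases hb : r ≤ α.length ∧ c ≤ α.sum
  · have hq := congrFun hF (⟨r, by omega⟩, ⟨c, by omega⟩)
    have h1 : min (T1 (r, c)) α.length = min (T2 (r, c)) α.length :=
      congrArg Fin.val hq
    have e1 : T1 (r, c) ≤ α.length := by
      by_cases h : T1 (r, c) = 0
      · omega
      · exact (kohnert_val_bound hK1 h).2.2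
    have e2 : T2 (r, c) ≤ α.length := by
      by_cases h : T2 (r, c) = 0
      · omega
      · exact (kohnert_val_bound hK2 h).2.2
    omega
  · have e1 : T1 (r, c) = 0 := by
      by_contra h
      have := kohnert_val_bound hK1 h
      omega
    have e2 : T2 (r, c) = 0 := by
      by_contra h
      have := kohnert_val_bound hK2 h
      omega
    rw [e1, e2]

lemma exists_ascent {α : List ℕ} (h : ¬ List.Pairwise (· ≥ ·) α) :
    ∃ i, i + 1 < α.length ∧ α.getD i 0 < α.getD (i+1) 0 := by
  by_contra hc
  push_neg at hc
  apply h
  apply List.isChain_iff_pairwise.mp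
  rw [List.isChain_iff_getElem]
  intro k hk
  have h1 := hc k (by omega)
  have hk1 : k < α.length := by omega
  have hk2 : k + 1 < α.length := by omega
  rw [List.getD_eq_getElem _ _ hk1, List.getD_eq_getElem _ _ hk2] at h1
  simpa [List.get_eq_getElem] using h1

/-- for a strong composition `α`, `κ_α = 𝔉_α` iff `α` is a partition
(weakly decreasing). -/
theorem stmt13 (α : List ℕ) (hpos : ∀ x ∈ α, 0 < x) :
    (∀ b : List ℕ, keyCoeff α b = fundCoeff α b) ↔ List.Pairwise (· ≥ ·) α := by
  constructor
  · intro hk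
    by_contra hns
    obtain ⟨i, hil, hAB⟩ := exists_ascent hns
    set b := (α.set i (α.getD (i+1) 0)).set (i+1) (α.getD i 0) with hbdef
    have hbne : b ≠ α := by
      intro h
      have hlt : i < b.length := by rw [h]; omega
      have h2 := List.getElem_of_eq h hlt
      have h3 : α[i]'(by omega) = α.getD i 0 := (List.getD_eq_getElem α 0 (by omega)).symm
      simp only [hbdef, List.getElem_set] at h2
      split_ifs at h2 <;> omega
    have h0 : fundCoeff α b = 0 := by rw [fundCoeff_char hpos, if_neg hbne]
    have hmem : modFilling α i ∈ {T : ℕ × ℕ → ℕ | IsKohnert α T ∧ wtList α T = b} :=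
      ⟨isKohnert_mod hil hAB, wt_mod hil hAB⟩
    have hpos' : 0 < keyCoeff α b := by
      unfold keyCoeff
      rw [Set.ncard_pos (kohnert_set_finite α b)]
      exact ⟨_, hmem⟩
    have := hk b
    omega
  · intro hs b
    rw [keyCoeff_of_sorted hs, fundCoeff_char hpos]
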